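/- Let d ≥ 1 and n ≥ 4 be integers. Let ν₀ be the uniform (Lebesgue) probability measure on [0,1]^d, and let ν₁ be the measure on [0,1]^d with density (with respect to Lebesgue measure) f₁(x) = 3/2 if 0 ≤ x₁ < 2/n, f₁(x) = 1/2 if 2/n ≤ x₁ < 4/n, and f₁(x) = 1 otherwise. Then: (i) ν₁ is a probability measure; (ii) ∫_{[0,1]^d} f₁(x)² dx = 1 + 1/n; (iii) the n-fold product measures satisfy ∫ (dν₁^{⊗n}/dν₀^{⊗n})² dν₀^{⊗n} = (1 + 1/n)^n ≤ e; and (iv) d_TV(ν₁^{⊗n}, ν₀^{⊗n}) ≤ √((e−1)/2). -/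

import Mathlib

open MeasureTheory
open scoped Classical

section Aux
variable {E : Type*} [MeasurableSpace E]

lemma TP.integral_pi_prod (μ : Measure E) [SigmaFinite μ] {n : ℕ} (f : Fin n → E → ℝ) :
    ∫ x : Fin n → E, ∏ i, f i (x i) ∂(Measure.pi fun _ => μ) = ∏ i, ∫ x, f i x ∂μ := by
  letI : MeasureSpace E := { volume := μ }
  show ∫ x : Fin n → E, ∏ i, f i (x i) ∂(Measure.pi fun _ => (volume : Measure E)) = _
  rw [← MeasureTheory.volume_pi]
  exact MeasureTheory.integral_fin_nat_prod_eq_prod f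

lemma TP.integrable_pi_prod (μ : Measure E) [SigmaFinite μ] {n : ℕ} (f : Fin n → E → ℝ)
    (hf : ∀ i, Integrable (f i) μ) :
    Integrable (fun x : Fin n → E => ∏ i, f i (x i)) (Measure.pi fun _ => μ) := by
  letI : MeasureSpace E := { volume := μ }
  show Integrable _ (Measure.pi fun _ => (volume : Measure E))
  rw [← MeasureTheory.volume_pi]
  exact MeasureTheory.Integrable.fintype_prod (f := f) hf

lemma TP.pi_withDensity (μ : Measure E) [IsFiniteMeasure μ] (n : ℕ)
    (f : E → ℝ) (hf : Measurable f) (h0 : ∀ x, 0 ≤ f x) (hint : Integrable f μ) :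
    Measure.pi (fun _ : Fin n => μ.withDensity fun x => ENNReal.ofReal (f x)) =
      (Measure.pi fun _ : Fin n => μ).withDensity
        (fun x => ENNReal.ofReal (∏ i, f (x i))) := by
  refine Measure.pi_eq fun s hs => ?_
  set g : Fin n → E → ℝ := fun i => (s i).indicator f with hg
  have hgint : ∀ i, Integrable (g i) μ := fun i => hint.indicator (hs i)
  have hgnn : ∀ i x, 0 ≤ g i x := fun i x => Set.indicator_nonneg (fun y _ => h0 y) x
  rw [withDensity_apply _ (MeasurableSet.univ_pi hs),
    ← lintegral_indicator (MeasurableSet.univ_pi hs) _]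
  have hptwise : (Set.univ.pi s).indicator
      (fun x : Fin n → E => ENNReal.ofReal (∏ i, f (x i)))
      = fun x => ENNReal.ofReal (∏ i, g i (x i)) := by
    funext x
    by_cases hx : x ∈ Set.univ.pi s
    · have hgi : ∀ i, g i (x i) = f (x i) :=
        fun i => Set.indicator_of_mem (hx i (Set.mem_univ i)) f
      simp only [Set.indicator_of_mem hx, hgi]
    · rw [Set.indicator_of_notMem hx]
      rw [Set.mem_univ_pi] at hx
      push_neg at hx
      obtain ⟨j, hj⟩ := hx
      have hz : g j (x j) = 0 := Set.indicator_of_notMem hj f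
      rw [Finset.prod_eq_zero (Finset.mem_univ j) hz, ENNReal.ofReal_zero]
  rw [hptwise,
    ← MeasureTheory.ofReal_integral_eq_lintegral_ofReal
      (TP.integrable_pi_prod μ g hgint)
      (Filter.Eventually.of_forall fun x => Finset.prod_nonneg fun i _ => hgnn i (x i)),
    TP.integral_pi_prod μ g,
    ENNReal.ofReal_prod_of_nonneg (fun i _ => integral_nonneg (hgnn i))]
  refine Finset.prod_congr rfl fun i _ => ?_
  rw [withDensity_apply _ (hs i), ← lintegral_indicator (hs i) _]
  rw [show ((s i).indicator fun a => ENNReal.ofReal (f a)) = fun a => ENNReal.ofReal (g i a) by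
    funext x
    by_cases hx : x ∈ s i
    · simp [Set.indicator_of_mem hx, hg]
    · simp [Set.indicator_of_notMem hx, hg]]
  rw [← MeasureTheory.ofReal_integral_eq_lintegral_ofReal (hgint i)
      (Filter.Eventually.of_forall (hgnn i))]

end Aux

/-- Total variation distance between two measures. -/
noncomputable def tvDist {Ω : Type*} [MeasurableSpace Ω] (P Q : Measure Ω) : ℝ :=
  ⨆ A : {A : Set Ω // MeasurableSet A}, |(P A.1).toReal - (Q A.1).toReal|

/-- The uniform (Lebesgue) probability measure on the unit cube `[0,1]^d`. -/
noncomputable def nu0 (d : ℕ) : Measure (Fin d → ℝ) :=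
  volume.restrict (Set.Icc 0 1)

/-- The perturbed density `f₁` of the two-point lower-bound construction. -/
noncomputable def f1 {d : ℕ} (hd : 0 < d) (n : ℕ) (x : Fin d → ℝ) : ℝ :=
  if 0 ≤ x ⟨0, hd⟩ ∧ x ⟨0, hd⟩ < 2 / (n : ℝ) then 3 / 2
  else if 2 / (n : ℝ) ≤ x ⟨0, hd⟩ ∧ x ⟨0, hd⟩ < 4 / (n : ℝ) then 1 / 2
  else 1

/-- The perturbed measure `ν₁` with density `f₁` with respect to `ν₀`. -/
noncomputable def nu1 {d : ℕ} (hd : 0 < d) (n : ℕ) : Measure (Fin d → ℝ) :=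
  (nu0 d).withDensity fun x => ENNReal.ofReal (f1 hd n x)

instance (d : ℕ) : SigmaFinite (nu0 d) := by
  unfold nu0; infer_instance

instance {d : ℕ} (hd : 0 < d) (n : ℕ) : SigmaFinite (nu1 hd n) := by
  unfold nu1; infer_instance

instance (d : ℕ) : IsProbabilityMeasure (nu0 d) := by
  constructor
  rw [nu0, Measure.restrict_apply_univ, ← Set.pi_univ_Icc, volume_pi_pi]
  simp

lemma TP.nu0_slab (d : ℕ) (hd : 0 < d) {a b : ℝ} (hab : Set.Ico a b ⊆ Set.Icc 0 1) :
    nu0 d ((fun x : Fin d → ℝ => x ⟨0, hd⟩) ⁻¹' Set.Ico a b) = ENNReal.ofReal (b - a) := by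
  have hms : MeasurableSet ((fun x : Fin d → ℝ => x ⟨0, hd⟩) ⁻¹' Set.Ico a b) :=
    (measurable_pi_apply _) measurableSet_Ico
  rw [nu0, Measure.restrict_apply hms]
  have hset : (fun x : Fin d → ℝ => x ⟨0, hd⟩) ⁻¹' Set.Ico a b ∩ Set.Icc 0 1 =
      Set.pi Set.univ (fun i => if i = ⟨0, hd⟩ then Set.Ico a b else Set.Icc 0 1) := by
    ext x
    simp only [Set.mem_inter_iff, Set.mem_preimage, ← Set.pi_univ_Icc, Set.mem_pi,
      Set.mem_univ, true_implies, Pi.zero_apply, Pi.one_apply]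
    constructor
    · rintro ⟨h1, h2⟩ i
      by_cases hi : i = ⟨0, hd⟩
      · simpa [hi] using h1
      · simpa [hi] using h2 i
    · intro h
      have h0 := h ⟨0, hd⟩
      simp only [if_pos rfl] at h0
      refine ⟨h0, fun i => ?_⟩
      by_cases hi : i = ⟨0, hd⟩
      · subst hi; exact hab h0
      · simpa [hi] using h i
  rw [hset, volume_pi_pi]
  rw [Finset.prod_eq_single (⟨0, hd⟩ : Fin d)]
  · simp [Real.volume_Ico]
  · intro i _ hi; simp [hi, Real.volume_Icc]
  · intro h; exact absurd (Finset.mem_univ _) h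

/-- The two-point construction yielding the parametric `n^{-1/2}` lower bound in the
Sobolev GAN minimax theorem. -/
theorem two_point_construction (d n : ℕ) (hd : 0 < d) (hn : 4 ≤ n) :
    IsProbabilityMeasure (nu1 hd n) ∧
    (∫ x, f1 hd n x ^ 2 ∂(nu0 d)) = 1 + 1 / (n : ℝ) ∧
    (∫ x, (((Measure.pi fun _ : Fin n => nu1 hd n).rnDeriv
          (Measure.pi fun _ : Fin n => nu0 d)) x).toReal ^ 2
        ∂(Measure.pi fun _ : Fin n => nu0 d)) = (1 + 1 / (n : ℝ)) ^ n ∧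
    (1 + 1 / (n : ℝ)) ^ n ≤ Real.exp 1 ∧
    tvDist (Measure.pi fun _ : Fin n => nu1 hd n) (Measure.pi fun _ : Fin n => nu0 d)
      ≤ Real.sqrt ((Real.exp 1 - 1) / 2) := by
  have hn4 : (4:ℝ) ≤ (n:ℝ) := by exact_mod_cast hn
  have hn0 : (0:ℝ) < n := by linarith
  have hnne : (n:ℝ) ≠ 0 := ne_of_gt hn0
  set i0 : Fin d := ⟨0, hd⟩ with hi0
  set A : Set (Fin d → ℝ) := (fun x => x i0) ⁻¹' Set.Ico 0 (2/(n:ℝ)) with hA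
  set B : Set (Fin d → ℝ) := (fun x => x i0) ⁻¹' Set.Ico (2/(n:ℝ)) (4/(n:ℝ)) with hB
  have hAms : MeasurableSet A := (measurable_pi_apply i0) measurableSet_Ico
  have hBms : MeasurableSet B := (measurable_pi_apply i0) measurableSet_Ico
  have hmemA : ∀ x : Fin d → ℝ, x ∈ A ↔ (0 ≤ x i0 ∧ x i0 < 2/(n:ℝ)) := fun x => Set.mem_Ico
  have hmemB : ∀ x : Fin d → ℝ, x ∈ B ↔ (2/(n:ℝ) ≤ x i0 ∧ x i0 < 4/(n:ℝ)) :=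
    fun x => Set.mem_Ico
  -- decomposition of f1 and f1^2
  have hf1e : ∀ x, f1 hd n x
      = 1 + A.indicator (fun _ => (1/2:ℝ)) x - B.indicator (fun _ => (1/2:ℝ)) x := by
    intro x
    unfold f1
    rw [← hi0]
    split_ifs with h1 h2
    · rw [Set.indicator_of_mem ((hmemA x).mpr h1),
        Set.indicator_of_notMem (fun hB' => absurd ((hmemB x).mp hB').1 (not_le.mpr h1.2))]
      norm_num
    · rw [Set.indicator_of_notMem (fun hA' => h1 ((hmemA x).mp hA')),
        Set.indicator_of_mem ((hmemB x).mpr h2)]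
      norm_num
    · rw [Set.indicator_of_notMem (fun hA' => h1 ((hmemA x).mp hA')),
        Set.indicator_of_notMem (fun hB' => h2 ((hmemB x).mp hB'))]
      norm_num
  have hf1sqe : ∀ x, f1 hd n x ^ 2
      = 1 + A.indicator (fun _ => (5/4:ℝ)) x - B.indicator (fun _ => (3/4:ℝ)) x := by
    intro x
    unfold f1
    rw [← hi0]
    split_ifs with h1 h2
    · rw [Set.indicator_of_mem ((hmemA x).mpr h1),
        Set.indicator_of_notMem (fun hB' => absurd ((hmemB x).mp hB').1 (not_le.mpr h1.2))]
      norm_num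
    · rw [Set.indicator_of_notMem (fun hA' => h1 ((hmemA x).mp hA')),
        Set.indicator_of_mem ((hmemB x).mpr h2)]
      norm_num
    · rw [Set.indicator_of_notMem (fun hA' => h1 ((hmemA x).mp hA')),
        Set.indicator_of_notMem (fun hB' => h2 ((hmemB x).mp hB'))]
      norm_num
  have hf1nn : ∀ x, 0 ≤ f1 hd n x := by
    intro x; unfold f1; split_ifs <;> norm_num
  have hf1le : ∀ x, f1 hd n x ≤ 3/2 := by
    intro x; unfold f1; split_ifs <;> norm_num
  have hmf1 : Measurable (f1 hd n) := by
    have hm0 : Measurable fun x : Fin d → ℝ => x i0 := measurable_pi_apply _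
    have hc : ∀ a b : ℝ, MeasurableSet {x : Fin d → ℝ | a ≤ x i0 ∧ x i0 < b} := by
      intro a b
      rw [Set.setOf_and]
      exact (measurableSet_le measurable_const hm0).inter
        (measurableSet_lt hm0 measurable_const)
    unfold f1
    rw [← hi0]
    exact Measurable.ite (hc 0 _) measurable_const
      (Measurable.ite (hc _ _) measurable_const measurable_const)
  -- the slab measures
  have hμA : nu0 d A = ENNReal.ofReal (2/(n:ℝ)) := by
    rw [hA, hi0]
    rw [TP.nu0_slab d hd (by
      intro y hy
      constructor
      · exact hy.1
      · have : (2:ℝ)/n ≤ 1 := by rw [div_le_one hn0]; linarith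
        exact le_of_lt (lt_of_lt_of_le hy.2 this))]
    norm_num
  have hμB : nu0 d B = ENNReal.ofReal (2/(n:ℝ)) := by
    rw [hB, hi0]
    rw [TP.nu0_slab d hd (by
      intro y hy
      constructor
      · exact le_trans (by positivity) hy.1
      · have : (4:ℝ)/n ≤ 1 := by rw [div_le_one hn0]; linarith
        exact le_of_lt (lt_of_lt_of_le hy.2 this))]
    rw [show (4:ℝ)/n - 2/n = 2/n by ring]
  have hμAr : (nu0 d A).toReal = 2/(n:ℝ) := by
    rw [hμA, ENNReal.toReal_ofReal (by positivity)]
  have hμBr : (nu0 d B).toReal = 2/(n:ℝ) := by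
    rw [hμB, ENNReal.toReal_ofReal (by positivity)]
  -- integrability and integrals over nu0
  have hintA : ∀ c : ℝ, Integrable (A.indicator fun _ => c) (nu0 d) :=
    fun c => (integrable_const c).indicator hAms
  have hintB : ∀ c : ℝ, Integrable (B.indicator fun _ => c) (nu0 d) :=
    fun c => (integrable_const c).indicator hBms
  have hint1 : Integrable (f1 hd n) (nu0 d) := by
    rw [funext hf1e]
    exact ((integrable_const 1).add (hintA _)).sub (hintB _)
  have hint2 : Integrable (fun x => f1 hd n x ^ 2) (nu0 d) := by
    rw [funext hf1sqe]
    exact ((integrable_const 1).add (hintA _)).sub (hintB _)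
  have hI1 : ∫ x, f1 hd n x ∂(nu0 d) = 1 := by
    have e1 : ∫ x, f1 hd n x ∂(nu0 d) = ∫ x, (1 + A.indicator (fun _ => (1/2:ℝ)) x
        - B.indicator (fun _ => (1/2:ℝ)) x) ∂(nu0 d) :=
      integral_congr_ae (Filter.Eventually.of_forall hf1e)
    have hIA1 : Integrable (fun x : Fin d → ℝ => 1 + A.indicator (fun _ => (1/2:ℝ)) x)
        (nu0 d) := (integrable_const 1).add (hintA _)
    rw [e1, integral_sub hIA1 (hintB _),
      integral_add (integrable_const 1) (hintA _), integral_const,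
      integral_indicator_const _ hAms, integral_indicator_const _ hBms]
    simp [measureReal_def, hμAr, hμBr]
  have hI2 : ∫ x, f1 hd n x ^ 2 ∂(nu0 d) = 1 + 1/(n:ℝ) := by
    have e2 : ∫ x, f1 hd n x ^ 2 ∂(nu0 d) = ∫ x, (1 + A.indicator (fun _ => (5/4:ℝ)) x
        - B.indicator (fun _ => (3/4:ℝ)) x) ∂(nu0 d) :=
      integral_congr_ae (Filter.Eventually.of_forall hf1sqe)
    have hIA2 : Integrable (fun x : Fin d → ℝ => 1 + A.indicator (fun _ => (5/4:ℝ)) x)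
        (nu0 d) := (integrable_const 1).add (hintA _)
    rw [e2, integral_sub hIA2 (hintB _),
      integral_add (integrable_const 1) (hintA _), integral_const,
      integral_indicator_const _ hAms, integral_indicator_const _ hBms]
    simp only [measureReal_def, measure_univ, ENNReal.toReal_one, smul_eq_mul, one_mul, hμAr, hμBr]
    field_simp
    ring
  -- (i)
  have hprob1 : IsProbabilityMeasure (nu1 hd n) := by
    constructor
    rw [nu1, withDensity_apply _ MeasurableSet.univ, Measure.restrict_univ,
      ← MeasureTheory.ofReal_integral_eq_lintegral_ofReal hint1
        (Filter.Eventually.of_forall hf1nn), hI1, ENNReal.ofReal_one]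
  -- the product measures
  set Q : Measure (Fin n → Fin d → ℝ) := Measure.pi fun _ => nu0 d with hQdef
  haveI : IsProbabilityMeasure Q := by rw [hQdef]; infer_instance
  haveI := hprob1
  haveI : IsProbabilityMeasure (Measure.pi fun _ : Fin n => nu1 hd n) := by infer_instance
  have hPW : (Measure.pi fun _ : Fin n => nu1 hd n) =
      Q.withDensity (fun x => ENNReal.ofReal (∏ i, f1 hd n (x i))) := by
    rw [hQdef]
    have := TP.pi_withDensity (nu0 d) n (f1 hd n) hmf1 hf1nn hint1
    rw [← this]
    rfl
  set g : (Fin n → Fin d → ℝ) → ℝ := fun x => ∏ i, f1 hd n (x i) with hgdef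
  have hgnn : ∀ x, 0 ≤ g x := fun x => Finset.prod_nonneg fun i _ => hf1nn (x i)
  have hgmeas : Measurable g :=
    Finset.measurable_prod _ fun i _ => hmf1.comp (measurable_pi_apply i)
  have hGmeas : Measurable fun x : Fin n → Fin d → ℝ => ENNReal.ofReal (g x) :=
    ENNReal.measurable_ofReal.comp hgmeas
  have hgint : Integrable g Q := by
    rw [hQdef, hgdef]
    exact TP.integrable_pi_prod (nu0 d) (fun _ => f1 hd n) (fun _ => hint1)
  have hg2int : Integrable (fun x => g x ^ 2) Q := by
    have : (fun x : Fin n → Fin d → ℝ => g x ^ 2) = fun x => ∏ i, f1 hd n (x i) ^ 2 := by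
      funext x; rw [hgdef, ← Finset.prod_pow]
    rw [this, hQdef]
    exact TP.integrable_pi_prod (nu0 d) (fun _ x => f1 hd n x ^ 2) (fun _ => hint2)
  have hIg : ∫ x, g x ∂Q = 1 := by
    rw [hQdef, hgdef, TP.integral_pi_prod (nu0 d) (fun _ => f1 hd n)]
    simp [hI1]
  have hIg2 : ∫ x, g x ^ 2 ∂Q = (1 + 1/(n:ℝ)) ^ n := by
    have he : (fun x : Fin n → Fin d → ℝ => g x ^ 2) = fun x => ∏ i, f1 hd n (x i) ^ 2 := by
      funext x; rw [hgdef, ← Finset.prod_pow]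
    rw [he, hQdef, TP.integral_pi_prod (nu0 d) (fun _ x => f1 hd n x ^ 2)]
    simp [hI2]
  -- (iii) first equality
  have hrn : (Measure.pi fun _ : Fin n => nu1 hd n).rnDeriv Q
      =ᵐ[Q] fun x => ENNReal.ofReal (g x) := by
    rw [hPW]
    exact Measure.rnDeriv_withDensity Q hGmeas
  have h3 : (∫ x, (((Measure.pi fun _ : Fin n => nu1 hd n).rnDeriv Q) x).toReal ^ 2 ∂Q)
      = (1 + 1/(n:ℝ)) ^ n := by
    rw [← hIg2]
    refine integral_congr_ae ?_
    filter_upwards [hrn] with x hx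
    rw [hx, ENNReal.toReal_ofReal (hgnn x)]
  -- (iii) second inequality
  have h4 : (1 + 1/(n:ℝ)) ^ n ≤ Real.exp 1 := by
    have hle : (1 + 1/(n:ℝ)) ≤ Real.exp (1/(n:ℝ)) := by
      have := Real.add_one_le_exp (1/(n:ℝ)); linarith
    calc (1 + 1/(n:ℝ)) ^ n ≤ (Real.exp (1/(n:ℝ))) ^ n :=
          pow_le_pow_left₀ (by positivity) hle n
      _ = Real.exp 1 := by
          rw [← Real.exp_nat_mul]
          congr 1
          field_simp
  -- (iv)
  have hbd : ∀ x, g x ≤ (3/2:ℝ) ^ n := by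
    intro x
    rw [hgdef]
    calc ∏ i, f1 hd n (x i) ≤ ∏ _i : Fin n, (3/2:ℝ) :=
          Finset.prod_le_prod (fun i _ => hf1nn (x i)) (fun i _ => hf1le (x i))
      _ = (3/2:ℝ) ^ n := by rw [Finset.prod_const, Finset.card_univ, Fintype.card_fin]
  set h : (Fin n → Fin d → ℝ) → ℝ := fun x => g x - 1 with hhdef
  have hhint : Integrable h Q := hgint.sub (integrable_const 1)
  have hhabsint : Integrable (fun x => |h x|) Q := hhint.abs
  have hPA : ∀ S : Set (Fin n → Fin d → ℝ), MeasurableSet S →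
      ((Measure.pi fun _ : Fin n => nu1 hd n) S).toReal = ∫ x in S, g x ∂Q := by
    intro S hS
    rw [hPW, withDensity_apply _ hS,
      ← MeasureTheory.ofReal_integral_eq_lintegral_ofReal (hgint.restrict)
        (Filter.Eventually.of_forall hgnn),
      ENNReal.toReal_ofReal (setIntegral_nonneg hS fun x _ => hgnn x)]
  have hdiff : ∀ S : Set (Fin n → Fin d → ℝ), MeasurableSet S →
      ((Measure.pi fun _ : Fin n => nu1 hd n) S).toReal - (Q S).toReal
        = ∫ x in S, h x ∂Q := by
    intro S hS
    rw [hPA S hS, hhdef]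
    rw [integral_sub (hgint.restrict) ((integrable_const 1).restrict)]
    simp [setIntegral_const, measureReal_def]
  have habs : ∀ S : Set (Fin n → Fin d → ℝ), MeasurableSet S →
      |((Measure.pi fun _ : Fin n => nu1 hd n) S).toReal - (Q S).toReal|
        ≤ ∫ x in S, |h x| ∂Q := by
    intro S hS
    rw [hdiff S hS]
    have := norm_integral_le_integral_norm (μ := Q.restrict S) h
    simpa [Real.norm_eq_abs] using this
  -- variance computation
  have hpow : (0:ℝ) ≤ (3/2:ℝ) ^ n := by positivity
  have hIh2 : ∫ x, h x ^ 2 ∂Q = (1 + 1/(n:ℝ)) ^ n - 1 := by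
    have e3 : ∫ x, h x ^ 2 ∂Q = ∫ x, (g x ^ 2 - 2 * g x + 1) ∂Q :=
      integral_congr_ae (Filter.Eventually.of_forall fun x => by rw [hhdef]; ring)
    have hgg : Integrable (fun x => g x ^ 2 - 2 * g x) Q := hg2int.sub (hgint.const_mul 2)
    rw [e3, integral_add hgg (integrable_const 1),
      integral_sub hg2int (hgint.const_mul 2), MeasureTheory.integral_const_mul, hIg2, hIg]
    simp
    ring
  have hh2int : Integrable (fun x => h x ^ 2) Q := by
    have e4 : (fun x => h x ^ 2) = fun x => g x ^ 2 - 2 * g x + 1 := by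
      funext x; rw [hhdef]; ring
    rw [e4]
    exact (hg2int.sub (hgint.const_mul 2)).add (integrable_const 1)
  -- Cauchy-Schwarz : L1 norm bounded by L2 norm on a probability space
  have hCS : ∫ x, |h x| ∂Q ≤ Real.sqrt (Real.exp 1 - 1) := by
    have hpq : Real.HolderConjugate 2 2 := Real.HolderConjugate.two_two
    have hCbd : ∀ x, |h x| ≤ (3/2:ℝ) ^ n + 1 := by
      intro x
      rw [hhdef]
      rw [abs_le]
      constructor
      · have := hgnn x; linarith
      · have := hbd x; linarith
    have hmem2 : MemLp (fun x => |h x|) (ENNReal.ofReal 2) Q := by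
      refine MemLp.of_bound (hhabsint.aestronglyMeasurable) ((3/2:ℝ) ^ n + 1) ?_
      exact Filter.Eventually.of_forall fun x => by
        rw [Real.norm_eq_abs, abs_abs]; exact hCbd x
    have hmem1 : MemLp (fun _ : Fin n → Fin d → ℝ => (1:ℝ)) (ENNReal.ofReal 2) Q :=
      memLp_const 1
    have hhold := integral_mul_le_Lp_mul_Lq_of_nonneg hpq
      (Filter.Eventually.of_forall fun x => abs_nonneg (h x))
      (Filter.Eventually.of_forall fun _ => zero_le_one)
      hmem2 hmem1
    have hL : ∫ x, |h x| * 1 ∂Q = ∫ x, |h x| ∂Q := by simp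
    have hR1 : ∫ x, |h x| ^ (2:ℝ) ∂Q = ∫ x, h x ^ 2 ∂Q := by
      refine integral_congr_ae (Filter.Eventually.of_forall fun x => ?_)
      simp only [Real.rpow_two, sq_abs]
    have hR2 : ∫ x : Fin n → Fin d → ℝ, (1:ℝ) ^ (2:ℝ) ∂Q = 1 := by
      simp
    rw [hL, hR1, hR2] at hhold
    have hsq : (∫ x, h x ^ 2 ∂Q) ^ (1/(2:ℝ)) ≤ Real.sqrt (Real.exp 1 - 1) := by
      rw [← Real.sqrt_eq_rpow]
      apply Real.sqrt_le_sqrt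
      rw [hIh2]
      linarith [h4]
    calc ∫ x, |h x| ∂Q ≤ (∫ x, h x ^ 2 ∂Q) ^ (1/(2:ℝ)) * 1 ^ (1/(2:ℝ)) := hhold
      _ = (∫ x, h x ^ 2 ∂Q) ^ (1/(2:ℝ)) := by rw [Real.one_rpow, mul_one]
      _ ≤ Real.sqrt (Real.exp 1 - 1) := hsq
  -- complement identity
  have hcompl : ∀ S : Set (Fin n → Fin d → ℝ), MeasurableSet S →
      ((Measure.pi fun _ : Fin n => nu1 hd n) Sᶜ).toReal - (Q Sᶜ).toReal
        = -(((Measure.pi fun _ : Fin n => nu1 hd n) S).toReal - (Q S).toReal) := by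
    intro S hS
    set P : Measure (Fin n → Fin d → ℝ) := Measure.pi fun _ : Fin n => nu1 hd n with hPdef
    have h1 : (P S).toReal + (P Sᶜ).toReal = 1 := by
      rw [← ENNReal.toReal_add (measure_ne_top _ _) (measure_ne_top _ _),
        measure_add_measure_compl hS, measure_univ, ENNReal.toReal_one]
    have h2 : (Q S).toReal + (Q Sᶜ).toReal = 1 := by
      rw [← ENNReal.toReal_add (measure_ne_top _ _) (measure_ne_top _ _),
        measure_add_measure_compl hS, measure_univ, ENNReal.toReal_one]
    linarith
  -- final total-variation bound
  have htv : tvDist (Measure.pi fun _ : Fin n => nu1 hd n) Q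
      ≤ Real.sqrt ((Real.exp 1 - 1) / 2) := by
    have hfin : Real.sqrt (Real.exp 1 - 1) / 2 ≤ Real.sqrt ((Real.exp 1 - 1) / 2) := by
      have he1 : (0:ℝ) ≤ Real.exp 1 - 1 := by
        have := Real.add_one_le_exp (1:ℝ); linarith
      have heq : Real.sqrt (Real.exp 1 - 1) / 2 = Real.sqrt ((Real.exp 1 - 1) / 4) := by
        rw [show (Real.exp 1 - 1)/4 = (Real.exp 1 - 1) * (1/2)^2 by ring,
          Real.sqrt_mul he1, Real.sqrt_sq (by norm_num : (0:ℝ) ≤ 1/2)]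
        ring
      rw [heq]
      exact Real.sqrt_le_sqrt (by linarith)
    unfold tvDist
    haveI : Nonempty {A : Set (Fin n → Fin d → ℝ) // MeasurableSet A} :=
      ⟨⟨∅, MeasurableSet.empty⟩⟩
    refine ciSup_le ?_
    rintro ⟨S, hS⟩
    refine le_trans ?_ hfin
    have hsum : (∫ x in S, |h x| ∂Q) + ∫ x in Sᶜ, |h x| ∂Q = ∫ x, |h x| ∂Q :=
      integral_add_compl hS hhabsint
    have hb1 := habs S hS
    have hb2 := habs Sᶜ hS.compl
    rw [hcompl S hS, abs_neg] at hb2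
    have : 2 * |((Measure.pi fun _ : Fin n => nu1 hd n) S).toReal - (Q S).toReal|
        ≤ ∫ x, |h x| ∂Q := by
      rw [← hsum]; linarith
    linarith [hCS]
  exact ⟨hprob1, hI2, h3, h4, htv⟩
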